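/- Let R_γ (MALA) and Q_γ (ULA) be the Metropolis-adjusted and unadjusted Langevin kernels with the same proposal. For any bounded measurable f and any x, |Q_γ f(x) - R_γ f(x)| ≤ 2‖f‖_∞ E[ |τ_γ(x, Z)| ], where τ_γ(x,z) is the log Metropolis ratio and Z standard Gaussian. In particular, if |τ_γ(x,z)| ≤ C γ^{3/2}(1 + ‖z‖⁴ + ‖x‖²), then ‖δ_x Q_γ - δ_x R_γ‖_TV ≤ C' γ^{3/2}(1 + ‖x‖²). -/

import Mathlib

open MeasureTheory Real
open scoped BigOperators RealInnerProductSpace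

noncomputable section

abbrev Euc (d : ℕ) := EuclideanSpace ℝ (Fin d)

/-- Laplacian via the second iterated Fréchet derivative in coordinate directions. -/
def lapl {d : ℕ} (φ : Euc d → ℝ) (x : Euc d) : ℝ :=
  ∑ i : Fin d, iteratedFDeriv ℝ 2 φ x ![EuclideanSpace.single i 1, EuclideanSpace.single i 1]

/-- The Langevin generator `L φ = -⟨∇U, ∇φ⟩ + Δφ`. -/
def gen {d : ℕ} (U φ : Euc d → ℝ) (x : Euc d) : ℝ :=
  - ⟪gradient U x, gradient φ x⟫ + lapl φ x

/-- The Gibbs probability measure `π(dx) ∝ e^{-U(x)} dx`. -/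
def gibbs {d : ℕ} (U : Euc d → ℝ) : Measure (Euc d) :=
  ((∫⁻ x, ENNReal.ofReal (Real.exp (-U x)))⁻¹) •
    ((volume : Measure (Euc d)).withDensity fun x => ENNReal.ofReal (Real.exp (-U x)))

/-- Polynomial growth of the `k`-th derivative. -/
def PolyGrowthD {d : ℕ} (k : ℕ) (f : Euc d → ℝ) : Prop :=
  ∃ (C : ℝ) (p : ℕ), ∀ x, ‖iteratedFDeriv ℝ k f x‖ ≤ C * (1 + ‖x‖) ^ p

/-- The standard Gaussian measure on `ℝ^d`. -/
def stdGaussian (d : ℕ) : Measure (Euc d) :=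
  (volume : Measure (Euc d)).withDensity
    fun z => ENNReal.ofReal ((2 * Real.pi) ^ (-(d:ℝ)/2) * Real.exp (-‖z‖ ^ 2 / 2))

/-- One step of ULA applied to a test function. -/
def ulaInt {d : ℕ} (U f : Euc d → ℝ) (γ : ℝ) (x : Euc d) : ℝ :=
  ∫ z, f (x - γ • gradient U x + Real.sqrt (2*γ) • z) ∂(stdGaussian d)

/-- One step of the Metropolis-adjusted kernel with log-ratio `τ`, applied to `f`. -/
def malaInt {d : ℕ} (U f : Euc d → ℝ) (τ : Euc d → ℝ) (γ : ℝ) (x : Euc d) : ℝ :=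
  ∫ z, (f (x - γ • gradient U x + Real.sqrt (2*γ) • z) * min 1 (Real.exp (-τ z))
        + f x * (1 - min 1 (Real.exp (-τ z)))) ∂(stdGaussian d)

lemma aux_int_exp {d : ℕ} {b : ℝ} (hb : 0 < b) :
    Integrable (fun v : Euc d => rexp (-b * ‖v‖^2)) := by
  have := (GaussianFourier.integrable_cexp_neg_mul_sq_norm_add
    (V := Euc d) (b := (b:ℂ)) (by simpa) 0 0).norm
  refine this.congr (Filter.Eventually.of_forall fun v => ?_)
  simp only [Complex.norm_exp]
  norm_num
  left
  rw [← Complex.ofReal_pow]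
  exact Complex.ofReal_re _

lemma gdens_meas {d : ℕ} : Measurable fun z : Euc d =>
    ENNReal.ofReal ((2 * Real.pi) ^ (-(d:ℝ)/2) * Real.exp (-‖z‖ ^ 2 / 2)) := by
  apply Measurable.ennreal_ofReal
  exact (measurable_const.mul ((measurable_norm.pow measurable_const).neg.div_const 2).exp)

instance stdGaussian_finite (d : ℕ) : IsFiniteMeasure (stdGaussian d) := by
  constructor
  rw [stdGaussian, withDensity_apply _ MeasurableSet.univ, Measure.restrict_univ]
  have hint : Integrable (fun z : Euc d =>
      (2 * Real.pi) ^ (-(d:ℝ)/2) * Real.exp (-‖z‖ ^ 2 / 2)) := by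
    have := (aux_int_exp (d := d) (b := 1/2) (by norm_num)).const_mul
      ((2 * Real.pi) ^ (-(d:ℝ)/2))
    refine this.congr (Filter.Eventually.of_forall fun v => ?_)
    ring_nf
  exact hint.lintegral_lt_top

/-- fourth moment integrability -/
lemma stdGaussian_moment4 (d : ℕ) :
    Integrable (fun z : Euc d => 1 + ‖z‖ ^ 4) (stdGaussian d) := by
  rw [stdGaussian, integrable_withDensity_iff gdens_meas
    (Filter.Eventually.of_forall fun z => ENNReal.ofReal_lt_top)]
  have hpos : ∀ z : Euc d, 0 ≤ (2 * Real.pi) ^ (-(d:ℝ)/2) * Real.exp (-‖z‖ ^ 2 / 2) := by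
    intro z; positivity
  have key : ∀ z : Euc d, ‖z‖ ^ 4 * rexp (-‖z‖^2/2) ≤ 32 * rexp (-(1/4) * ‖z‖^2) := by
    intro z
    have h1 : (‖z‖^2/4) ^ 2 / 2 ≤ rexp (‖z‖^2/4) := by
      have := Real.sum_le_exp_of_nonneg (x := ‖z‖^2/4) (by positivity) 3
      simp [Finset.sum_range_succ] at this
      nlinarith [this]
    have h2 : rexp (-‖z‖^2/2) = rexp (-‖z‖^2/4) * rexp (-‖z‖^2/4) := by
      rw [← Real.exp_add]; ring_nf
    have h3 : ‖z‖^4 * rexp (-‖z‖^2/4) ≤ 32 := by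
      have hinv : rexp (-‖z‖^2/4) = (rexp (‖z‖^2/4))⁻¹ := by
        rw [← Real.exp_neg]; ring_nf
      rw [hinv]
      rw [mul_inv_le_iff₀ (Real.exp_pos _)]
      nlinarith [h1]
    calc ‖z‖ ^ 4 * rexp (-‖z‖^2/2)
        = (‖z‖^4 * rexp (-‖z‖^2/4)) * rexp (-‖z‖^2/4) := by rw [h2]; ring
      _ ≤ 32 * rexp (-‖z‖^2/4) := by
          apply mul_le_mul_of_nonneg_right h3 (Real.exp_pos _).le
      _ = 32 * rexp (-(1/4) * ‖z‖^2) := by ring_nf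
  set c := (2 * Real.pi) ^ (-(d:ℝ)/2) with hc
  have hc0 : 0 ≤ c := by positivity
  have hdom : Integrable (fun z : Euc d =>
      c * rexp (-(1/2) * ‖z‖^2) + c * (32 * rexp (-(1/4) * ‖z‖^2))) := by
    exact ((aux_int_exp (by norm_num)).const_mul c).add
      (((aux_int_exp (by norm_num)).const_mul 32).const_mul c)
  refine hdom.mono' ?_ (Filter.Eventually.of_forall fun z => ?_)
  · apply Continuous.aestronglyMeasurable
    have : Continuous fun z : Euc d => rexp (-‖z‖^2/2) := by fun_prop
    simp only [ENNReal.toReal_ofReal (hpos _)]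
    fun_prop
  · have h0 : (0:ℝ) ≤ (1 + ‖z‖ ^ 4) * ((ENNReal.ofReal (c * rexp (-‖z‖ ^ 2 / 2))).toReal) := by
      positivity
    rw [Real.norm_of_nonneg h0, ENNReal.toReal_ofReal (hpos z)]
    have : (1 + ‖z‖ ^ 4) * (c * rexp (-‖z‖ ^ 2 / 2))
        = c * rexp (-‖z‖^2/2) + c * (‖z‖^4 * rexp (-‖z‖^2/2)) := by ring
    rw [this]
    have e1 : rexp (-‖z‖^2/2) = rexp (-(1/2) * ‖z‖^2) := by ring_nf
    apply add_le_add
    · rw [e1]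
    · exact mul_le_mul_of_nonneg_left (key z) hc0

lemma one_sub_min_nonneg (t : ℝ) : 0 ≤ 1 - min 1 (rexp (-t)) := by
  have := min_le_left 1 (rexp (-t)); linarith

lemma one_sub_min_le_abs (t : ℝ) : 1 - min 1 (rexp (-t)) ≤ |t| := by
  rcases le_or_gt 0 t with h | h
  · rw [min_eq_right (Real.exp_le_one_iff.mpr (by linarith)), abs_of_nonneg h]
    have := Real.add_one_le_exp (-t)
    linarith
  · rw [min_eq_left (Real.one_le_exp (by linarith))]
    simp [abs_nonneg]

theorem stmt_10 {d : ℕ} (U : Euc d → ℝ) (γbar : ℝ) (hγbar : 0 < γbar)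
    (τ : ℝ → Euc d → Euc d → ℝ)
    (hτmeas : ∀ γ x, Measurable (τ γ x)) :
    (∀ γ : ℝ, 0 < γ → ∀ (x : Euc d) (f : Euc d → ℝ) (B : ℝ), Measurable f →
      (∀ y, |f y| ≤ B) →
      Integrable (fun z => τ γ x z) (stdGaussian d) →
      |ulaInt U f γ x - malaInt U f (τ γ x) γ x|
        ≤ 2 * B * ∫ z, |τ γ x z| ∂(stdGaussian d)) ∧
    (∀ C : ℝ, 0 ≤ C →
      (∀ γ ∈ Set.Ioc (0:ℝ) γbar, ∀ x z : Euc d,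
        |τ γ x z| ≤ C * γ ^ ((3:ℝ)/2) * (1 + ‖z‖ ^ 4 + ‖x‖ ^ 2)) →
      ∃ C' : ℝ, ∀ γ ∈ Set.Ioc (0:ℝ) γbar, ∀ (x : Euc d) (f : Euc d → ℝ),
        Measurable f → (∀ y, |f y| ≤ 1) →
        |ulaInt U f γ x - malaInt U f (τ γ x) γ x|
          ≤ C' * γ ^ ((3:ℝ)/2) * (1 + ‖x‖ ^ 2)) := by
  have hpart1 : ∀ γ : ℝ, 0 < γ → ∀ (x : Euc d) (f : Euc d → ℝ) (B : ℝ), Measurable f →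
      (∀ y, |f y| ≤ B) →
      Integrable (fun z => τ γ x z) (stdGaussian d) →
      |ulaInt U f γ x - malaInt U f (τ γ x) γ x|
        ≤ 2 * B * ∫ z, |τ γ x z| ∂(stdGaussian d) := by
    intro γ hγ x f B hfmeas hfB hτint
    set μ := stdGaussian d with hμ
    set y : Euc d → Euc d := fun z => x - γ • gradient U x + Real.sqrt (2*γ) • z with hy
    have hymeas : Measurable y := by
      apply Measurable.add measurable_const
      exact (measurable_id (α := Euc d)).const_smul (Real.sqrt (2*γ))
    have hgmeas : Measurable fun z => f (y z) := hfmeas.comp hymeas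
    have hB0 : 0 ≤ B := le_trans (abs_nonneg _) (hfB 0)
    set a : Euc d → ℝ := fun z => min 1 (rexp (-(τ γ x z))) with ha
    have hameas : Measurable a := measurable_const.min ((hτmeas γ x).neg.exp)
    have ha0 : ∀ z, 0 ≤ a z := fun z => le_min zero_le_one (Real.exp_pos _).le
    have ha1 : ∀ z, a z ≤ 1 := fun z => min_le_left _ _
    have hg : Integrable (fun z => f (y z)) μ :=
      (integrable_const B).mono' hgmeas.aestronglyMeasurable
        (Filter.Eventually.of_forall fun z => by
          rw [Real.norm_eq_abs]; exact hfB _)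
    have h1 : Integrable (fun z => f (y z) * a z) μ :=
      (integrable_const B).mono' (hgmeas.mul hameas).aestronglyMeasurable
        (Filter.Eventually.of_forall fun z => by
          rw [Real.norm_eq_abs, abs_mul]
          calc |f (y z)| * |a z| ≤ B * 1 := by
                apply mul_le_mul (hfB _) _ (abs_nonneg _) hB0
                rw [abs_of_nonneg (ha0 z)]; exact ha1 z
            _ = B := mul_one B)
    have h2 : Integrable (fun z => f x * (1 - a z)) μ :=
      (integrable_const B).mono' (measurable_const.mul (measurable_const.sub hameas)).aestronglyMeasurable
        (Filter.Eventually.of_forall fun z => by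
          rw [Real.norm_eq_abs, abs_mul]
          calc |f x| * |1 - a z| ≤ B * 1 := by
                apply mul_le_mul (hfB _) _ (abs_nonneg _) hB0
                rw [abs_of_nonneg (by have := ha1 z; linarith)]
                have := ha0 z; linarith
            _ = B := mul_one B)
    have hcomb : Integrable (fun z => f (y z) * a z + f x * (1 - a z)) μ := h1.add h2
    have hsplit : ulaInt U f γ x - malaInt U f (τ γ x) γ x
        = ∫ z, (f (y z) - f x) * (1 - a z) ∂μ := by
      rw [ulaInt, malaInt, ← integral_sub hg hcomb]
      congr 1; funext z; ring
    rw [hsplit]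
    calc |∫ z, (f (y z) - f x) * (1 - a z) ∂μ|
        ≤ ∫ z, |f (y z) - f x| * |1 - a z| ∂μ := by
          have := norm_integral_le_integral_norm (μ := μ)
            (fun z => (f (y z) - f x) * (1 - a z))
          simpa [Real.norm_eq_abs, abs_mul] using this
      _ ≤ ∫ z, 2 * B * |τ γ x z| ∂μ := by
          refine integral_mono_of_nonneg (Filter.Eventually.of_forall fun z => ?_)
            ((hτint.abs).const_mul (2 * B)) (Filter.Eventually.of_forall fun z => ?_)
          · positivity
          show |f (y z) - f x| * |1 - a z| ≤ 2 * B * |τ γ x z|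

          apply mul_le_mul
          · calc |f (y z) - f x| ≤ |f (y z)| + |f x| := abs_sub _ _
              _ ≤ B + B := add_le_add (hfB _) (hfB _)
              _ = 2 * B := by ring
          · rw [abs_of_nonneg (one_sub_min_nonneg _)]
            exact one_sub_min_le_abs _
          · exact abs_nonneg _
          · linarith
      _ = 2 * B * ∫ z, |τ γ x z| ∂μ := integral_const_mul _ _
  refine ⟨hpart1, ?_⟩
  intro C hC hbound
  have hM := stdGaussian_moment4 d
  set M := ∫ z, (1 + ‖z‖ ^ 4) ∂(stdGaussian d) with hMdef
  have hM0 : 0 ≤ M := integral_nonneg fun z => by positivity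
  refine ⟨2 * C * M, ?_⟩
  intro γ hγ x f hfmeas hfB
  have hγ32 : 0 ≤ γ ^ ((3:ℝ)/2) := Real.rpow_nonneg hγ.1.le _
  have hdom : ∀ z : Euc d, |τ γ x z| ≤ C * γ ^ ((3:ℝ)/2) * (1 + ‖x‖^2) * (1 + ‖z‖^4) := by
    intro z
    have h := hbound γ hγ x z
    have hz : (0:ℝ) ≤ ‖z‖^4 := by positivity
    have hx : (0:ℝ) ≤ ‖x‖^2 := by positivity
    have : 1 + ‖z‖^4 + ‖x‖^2 ≤ (1 + ‖x‖^2) * (1 + ‖z‖^4) := by nlinarith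
    calc |τ γ x z| ≤ C * γ ^ ((3:ℝ)/2) * (1 + ‖z‖^4 + ‖x‖^2) := h
      _ ≤ C * γ ^ ((3:ℝ)/2) * ((1 + ‖x‖^2) * (1 + ‖z‖^4)) := by
          apply mul_le_mul_of_nonneg_left this (by positivity)
      _ = C * γ ^ ((3:ℝ)/2) * (1 + ‖x‖^2) * (1 + ‖z‖^4) := by ring
  have hτint : Integrable (fun z => τ γ x z) (stdGaussian d) :=
    (hM.const_mul (C * γ ^ ((3:ℝ)/2) * (1 + ‖x‖^2))).mono'
      (hτmeas γ x).aestronglyMeasurable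
      (Filter.Eventually.of_forall fun z => by
        rw [Real.norm_eq_abs]; exact hdom z)
  have key := hpart1 γ hγ.1 x f 1 hfmeas hfB hτint
  have hint_le : (∫ z, |τ γ x z| ∂(stdGaussian d))
      ≤ C * γ ^ ((3:ℝ)/2) * (1 + ‖x‖^2) * M := by
    calc (∫ z, |τ γ x z| ∂(stdGaussian d))
        ≤ ∫ z, C * γ ^ ((3:ℝ)/2) * (1 + ‖x‖^2) * (1 + ‖z‖^4) ∂(stdGaussian d) := by
          apply integral_mono_of_nonneg
            (Filter.Eventually.of_forall fun z => abs_nonneg _)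
            (hM.const_mul _)
            (Filter.Eventually.of_forall fun z => hdom z)
      _ = C * γ ^ ((3:ℝ)/2) * (1 + ‖x‖^2) * M := integral_const_mul _ _
  calc |ulaInt U f γ x - malaInt U f (τ γ x) γ x|
      ≤ 2 * 1 * ∫ z, |τ γ x z| ∂(stdGaussian d) := key
    _ ≤ 2 * 1 * (C * γ ^ ((3:ℝ)/2) * (1 + ‖x‖^2) * M) := by
        apply mul_le_mul_of_nonneg_left hint_le (by norm_num)
    _ = 2 * C * M * γ ^ ((3:ℝ)/2) * (1 + ‖x‖^2) := by ring
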